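/- Let N ≥ 2, let a_0, …, a_N be complex numbers, let x, y ∈ ℝ with z = x + iy ≠ 0, set p̂ = 2x, q̂ = −(x² + y²). Define b_{N+1} = 0, b_N = a_N, b_n = a_n + p̂·b_{n+1} + q̂·b_{n+2} for n = N−1, …, 1, and u = a_0 + x·b_1 + q̂·b_2. Then |u| ≤ Σ_{k=0}^{N} |a_k|·|z|^k. -/

import Mathlib

open Finset Complex

/-- Bound on the real-part output of Goertzel's algorithm:
`|u| ≤ ∑_{k=0}^{N} |a k| * |z|^k`. -/
theorem goertzel_u_bound (N : ℕ) (hN : 2 ≤ N) (a : ℕ → ℂ) (x y : ℝ) (z : ℂ)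
    (hz : z = (x : ℂ) + (y : ℂ) * I) (hz0 : z ≠ 0)
    (phat qhat : ℝ) (hp : phat = 2 * x) (hq : qhat = -(x ^ 2 + y ^ 2))
    (b : ℕ → ℂ) (hbN1 : b (N + 1) = 0) (hbN : b N = a N)
    (hb : ∀ n, 1 ≤ n → n ≤ N - 1 →
      b n = a n + (phat : ℂ) * b (n + 1) + (qhat : ℂ) * b (n + 2))
    (u : ℂ) (hu : u = a 0 + (x : ℂ) * b 1 + (qhat : ℂ) * b 2) :
    ‖u‖ ≤ ∑ k ∈ range (N + 1), ‖a k‖ * ‖z‖ ^ k := by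
  set w : ℂ := (starRingEnd ℂ) z with hwdef
  have hw : w = (x : ℂ) - (y : ℂ) * I := by
    rw [hwdef, hz]; simp [map_add, map_mul, Complex.conj_I, Complex.conj_ofReal]
    ring
  set c : ℕ → ℂ := fun k => (z ^ k + w ^ k) / 2 with hc
  have hzsq : z ^ 2 = (phat : ℂ) * z + (qhat : ℂ) := by
    rw [hz, hp, hq]; push_cast
    have : (I : ℂ) ^ 2 = -1 := Complex.I_sq
    ring_nf
    rw [this]; ring
  have hwsq : w ^ 2 = (phat : ℂ) * w + (qhat : ℂ) := by
    rw [hw, hp, hq]; push_cast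
    have : (I : ℂ) ^ 2 = -1 := Complex.I_sq
    ring_nf
    rw [this]; ring
  have c0 : c 0 = 1 := by simp [hc]
  have c1 : c 1 = (x : ℂ) := by
    simp only [hc, pow_one]; rw [hz, hw]; ring
  have crec : ∀ k, c (k + 2) = (phat : ℂ) * c (k + 1) + (qhat : ℂ) * c k := by
    intro k
    have h1 : z ^ (k + 2) = z ^ k * z ^ 2 := by ring
    have h2 : w ^ (k + 2) = w ^ k * w ^ 2 := by ring
    simp only [hc, h1, h2, hzsq, hwsq]
    ring
  -- F m = c (m+1) * b (m+1) + qhat * c m * b (m+2)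
  set F : ℕ → ℂ := fun m => c (m + 1) * b (m + 1) + (qhat : ℂ) * c m * b (m + 2) with hF
  have hFtop : F (N - 1) = a N * c N := by
    have h1 : N - 1 + 1 = N := by omega
    have h2 : N - 1 + 2 = N + 1 := by omega
    simp only [hF, h1, h2, hbN1, hbN]
    ring
  have hFstep : ∀ m, m + 1 ≤ N - 1 → F m = a (m + 1) * c (m + 1) + F (m + 1) := by
    intro m hm
    have hb' := hb (m + 1) (by omega) hm
    simp only [hF]
    rw [hb', crec m]
    ring
  have key : ∀ j, j ≤ N - 1 → F (N - 1 - j) = ∑ k ∈ Icc (N - j) N, a k * c k := by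
    intro j
    induction j with
    | zero => intro _; simpa using hFtop
    | succ j ih =>
      intro hj
      have hm : (N - 1 - (j + 1)) + 1 = N - 1 - j := by omega
      have := hFstep (N - 1 - (j + 1)) (by omega)
      rw [this, hm, ih (by omega)]
      have hins : Icc (N - (j + 1)) N = insert (N - (j + 1)) (Icc (N - j) N) := by
        ext t; simp; omega
      rw [hins, Finset.sum_insert (by simp; omega)]
      have : N - (j + 1) = N - 1 - j := by omega
      rw [this]
  have hF0 : F 0 = ∑ k ∈ Icc 1 N, a k * c k := by
    have h1 : N - 1 - (N - 1) = 0 := by omega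
    have h2 : N - (N - 1) = 1 := by omega
    have := key (N - 1) le_rfl
    rwa [h1, h2] at this
  have husum : u = ∑ k ∈ range (N + 1), a k * c k := by
    have hrange : range (N + 1) = insert 0 (Icc 1 N) := by
      ext t; simp; omega
    rw [hrange, Finset.sum_insert (by simp), ← hF0, hu]
    simp only [hF]
    rw [c0, c1]
    ring
  rw [husum]
  calc ‖∑ k ∈ range (N + 1), a k * c k‖
      ≤ ∑ k ∈ range (N + 1), ‖a k * c k‖ :=
        norm_sum_le _ _
    _ ≤ ∑ k ∈ range (N + 1), ‖a k‖ * ‖z‖ ^ k := by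
        apply Finset.sum_le_sum
        intro k _
        rw [norm_mul]
        apply mul_le_mul_of_nonneg_left _ (norm_nonneg _)
        have hwabs : ‖w‖ = ‖z‖ := by simp [hwdef]
        calc ‖c k‖ = ‖z ^ k + w ^ k‖ / 2 := by
              simp only [hc]; rw [norm_div]; norm_num
          _ ≤ (‖z ^ k‖ + ‖w ^ k‖) / 2 := by
              gcongr; exact norm_add_le _ _
          _ = ‖z‖ ^ k := by rw [norm_pow, norm_pow, hwabs]; ring
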